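/- Let G = (V, E_r ∪ E_b) be a red/blue graph, let r ≥ 1 and z ≥ 3 be integers, and for i ≥ 2 set B_i = (r·i)^{2(i-1)} and B_1 = 1. Suppose that for every integer i with 2 ≤ i ≤ z−1 and all vertices u, v ∈ V, the number of red-filled i-walks from u to v is at most B_i. Then for all vertices S₁, S₂, S ∈ V, the number of red-filled z-walks (T₁ = S₁, T₂, …, T_z, T_{z+1} = S₂) from S₁ to S₂ with S ∈ {T₂, …, T_z} is at most B_z/(z·r). -/

import Mathlib

open Finset

/-- `IsBlueWalk Eb w`: the tuple `w = (v₁, …, v_{ℓ+1})` is an `ℓ`-walk, i.e. consecutive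
vertices are joined by blue edges. -/
def IsBlueWalk {V : Type*} (Eb : V → V → Prop) {ℓ : ℕ} (w : Fin (ℓ + 1) → V) : Prop :=
  ∀ i : Fin ℓ, Eb (w i.castSucc) (w i.succ)

/-- `IsRedFilled Er w`: every pair of non-consecutive vertices of the walk `w` is joined
by a red edge. -/
def IsRedFilled {V : Type*} (Er : V → V → Prop) {ℓ : ℕ} (w : Fin (ℓ + 1) → V) : Prop :=
  ∀ i j : Fin (ℓ + 1), (i : ℕ) + 1 < (j : ℕ) → Er (w i) (w j)

/-- The set of red-filled `ℓ`-walks from `u` to `v`. -/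
def RedFilledWalks {V : Type*} (Er Eb : V → V → Prop) (ℓ : ℕ) (u v : V) :
    Set (Fin (ℓ + 1) → V) :=
  {w | IsBlueWalk Eb w ∧ IsRedFilled Er w ∧ w 0 = u ∧ w (Fin.last ℓ) = v}

lemma my_split {V : Type*} [Fintype V] (Er Eb : V → V → Prop) (z j : ℕ)
    (hj1 : 1 ≤ j) (hj2 : j < z) (S₁ S₂ S : V) (hjlt : j < z + 1) :
    {w ∈ RedFilledWalks Er Eb z S₁ S₂ | w ⟨j, hjlt⟩ = S}.ncard ≤
      (RedFilledWalks Er Eb j S₁ S).ncard * (RedFilledWalks Er Eb (z - j) S S₂).ncard := by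
  classical
  set k := z - j with hk
  have hjk : j + k = z := by omega
  set f : (Fin (z + 1) → V) → (Fin (j + 1) → V) × (Fin (k + 1) → V) :=
    fun w => (fun i => w ⟨i.val, by have := i.isLt; omega⟩,
              fun i => w ⟨j + i.val, by have := i.isLt; omega⟩) with hf
  have hcongr : ∀ (w : Fin (z+1) → V) (a b : Fin (z+1)), (a:ℕ) = (b:ℕ) → w a = w b :=
    fun w a b h => congrArg w (Fin.ext h)
  have hmaps : Set.MapsTo f {w ∈ RedFilledWalks Er Eb z S₁ S₂ | w ⟨j, hjlt⟩ = S}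
      ((RedFilledWalks Er Eb j S₁ S) ×ˢ (RedFilledWalks Er Eb k S S₂)) := by
    rintro w ⟨⟨hb, hrf, h0, hl⟩, hS⟩
    constructor
    · refine ⟨fun i => ?_, fun a b hab => ?_, ?_, ?_⟩
      · have h := hb ⟨i.val, by have := i.isLt; omega⟩
        convert h using 2 <;> exact Fin.ext (by simp)
      · have h := hrf ⟨a.val, by have := a.isLt; omega⟩ ⟨b.val, by have := b.isLt; omega⟩
          (by simpa using hab)
        convert h using 2
      · exact (hcongr w _ 0 (by simp)).trans h0
      · exact (hcongr w _ ⟨j, hjlt⟩ (by simp)).trans hS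
    · refine ⟨fun i => ?_, fun a b hab => ?_, ?_, ?_⟩
      · have h := hb ⟨j + i.val, by have := i.isLt; omega⟩
        convert h using 2 <;> exact Fin.ext (by simp <;> omega)
      · have h := hrf ⟨j + a.val, by have := a.isLt; omega⟩ ⟨j + b.val, by have := b.isLt; omega⟩
          (by simp; omega)
        convert h using 2
      · exact (hcongr w _ ⟨j, hjlt⟩ (by simp)).trans hS
      · exact (hcongr w _ (Fin.last z) (by simp; omega)).trans hl
  have hinj : Set.InjOn f {w ∈ RedFilledWalks Er Eb z S₁ S₂ | w ⟨j, hjlt⟩ = S} := by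
    intro w _ w' _ h
    funext i
    rcases le_or_gt i.val j with h1 | h1
    · have h2 := congrFun (congrArg Prod.fst h) ⟨i.val, by omega⟩
      simp only [hf] at h2
      have e : (⟨i.val, by have := i.isLt; omega⟩ : Fin (z+1)) = i := Fin.ext rfl
      rwa [e] at h2
    · have h2 := congrFun (congrArg Prod.snd h) ⟨i.val - j, by have := i.isLt; omega⟩
      simp only [hf] at h2
      have e : (⟨j + (i.val - j), by have := i.isLt; omega⟩ : Fin (z+1)) = i :=
        Fin.ext (by show j + (i.val - j) = i.val; omega)
      rwa [e] at h2
  calc {w ∈ RedFilledWalks Er Eb z S₁ S₂ | w ⟨j, hjlt⟩ = S}.ncard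
      = (f '' {w ∈ RedFilledWalks Er Eb z S₁ S₂ | w ⟨j, hjlt⟩ = S}).ncard :=
        (Set.ncard_image_of_injOn hinj).symm
    _ ≤ ((RedFilledWalks Er Eb j S₁ S) ×ˢ (RedFilledWalks Er Eb k S S₂)).ncard :=
        Set.ncard_le_ncard hmaps.image_subset (Set.toFinite _)
    _ = (RedFilledWalks Er Eb j S₁ S).ncard * (RedFilledWalks Er Eb k S S₂).ncard := by
        rw [← Nat.card_coe_set_eq, ← Nat.card_coe_set_eq, ← Nat.card_coe_set_eq,
          ← Nat.card_prod]
        exact Nat.card_congr (Equiv.Set.prod _ _)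

lemma my_one_walk {V : Type*} [Fintype V] (Er Eb : V → V → Prop) (u v : V) :
    (RedFilledWalks Er Eb 1 u v).ncard ≤ 1 := by
  rw [Set.ncard_le_one (Set.toFinite _)]
  rintro w ⟨_, _, h0, hl⟩ w' ⟨_, _, h0', hl'⟩
  funext i
  match i with
  | 0 => rw [h0, h0']
  | 1 => rw [show (1 : Fin (1 + 1)) = Fin.last 1 from rfl, hl, hl']

lemma my_biUnion {α ι : Type*} (s : Finset ι) (t : ι → Set α) :
    (⋃ i ∈ s, t i).ncard ≤ ∑ i ∈ s, (t i).ncard := by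
  classical
  induction s using Finset.induction with
  | empty => simp
  | insert a s h ih =>
    rw [Finset.set_biUnion_insert, Finset.sum_insert h]
    exact le_trans (Set.ncard_union_le _ _) (by gcongr)

/-- Let `G = (V, E_r ∪ E_b)` be a red/blue graph, `r ≥ 1`, `z ≥ 3`, and set
`B_i = (r·i)^{2(i-1)}`. If for every `2 ≤ i ≤ z - 1` and all vertices `u, v` the number
of red-filled `i`-walks from `u` to `v` is at most `B_i`, then for all vertices
`S₁, S₂, S`, the number of red-filled `z`-walks from `S₁` to `S₂` containing `S` as an
interior vertex is at most `B_z / (z·r)`. -/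
theorem stmt1 {V : Type*} [Fintype V] (Er Eb : V → V → Prop)
    (hErs : Symmetric Er) (hEbs : Symmetric Eb)
    (hdisj : ∀ u v, ¬(Er u v ∧ Eb u v))
    (hirrR : ∀ v, ¬Er v v) (hirrB : ∀ v, ¬Eb v v)
    (r z : ℕ) (hr : 1 ≤ r) (hz : 3 ≤ z)
    (hind : ∀ i, 2 ≤ i → i ≤ z - 1 → ∀ u v : V,
      (RedFilledWalks Er Eb i u v).ncard ≤ (r * i) ^ (2 * (i - 1)))
    (S₁ S₂ S : V) :
    ({w ∈ RedFilledWalks Er Eb z S₁ S₂ |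
        ∃ j : Fin (z + 1), j ≠ 0 ∧ j ≠ Fin.last z ∧ w j = S}.ncard : ℝ) ≤
      ((r * z) ^ (2 * (z - 1)) : ℕ) / ((z : ℝ) * r) := by
  classical
  -- the per-index sets
  set t : ℕ → Set (Fin (z + 1) → V) :=
    fun j => {w | w ∈ RedFilledWalks Er Eb z S₁ S₂ ∧ ∃ h : j < z + 1, w ⟨j, h⟩ = S} with ht
  -- uniform bound for 1 ≤ i ≤ z - 1
  have hbound : ∀ i, 1 ≤ i → i ≤ z - 1 → ∀ u v : V,
      (RedFilledWalks Er Eb i u v).ncard ≤ (r * i) ^ (2 * (i - 1)) := by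
    intro i h1 h2 u v
    rcases eq_or_lt_of_le h1 with h | h
    · subst h
      simpa using my_one_walk Er Eb u v
    · exact hind i h h2 u v
  -- each t j is small
  have htj : ∀ j ∈ Finset.Ico 1 z, (t j).ncard ≤ (r * z) ^ (2 * z - 4) := by
    intro j hj
    rw [Finset.mem_Ico] at hj
    have hjlt : j < z + 1 := by omega
    have heq : t j = {w ∈ RedFilledWalks Er Eb z S₁ S₂ | w ⟨j, hjlt⟩ = S} := by
      ext w; constructor
      · rintro ⟨hw, _, hS⟩; exact ⟨hw, hS⟩
      · rintro ⟨hw, hS⟩; exact ⟨hw, hjlt, hS⟩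
    rw [heq]
    calc {w ∈ RedFilledWalks Er Eb z S₁ S₂ | w ⟨j, hjlt⟩ = S}.ncard
        ≤ (RedFilledWalks Er Eb j S₁ S).ncard * (RedFilledWalks Er Eb (z - j) S S₂).ncard :=
          my_split Er Eb z j hj.1 hj.2 S₁ S₂ S hjlt
      _ ≤ (r * j) ^ (2 * (j - 1)) * (r * (z - j)) ^ (2 * (z - j - 1)) := by
          have b1 := hbound j hj.1 (by omega) S₁ S
          have b2 := hbound (z - j) (by omega) (by omega) S S₂
          exact Nat.mul_le_mul b1 b2
      _ ≤ (r * z) ^ (2 * (j - 1)) * (r * z) ^ (2 * (z - j - 1)) := by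
          gcongr <;> omega
      _ = (r * z) ^ (2 * (j - 1) + 2 * (z - j - 1)) := (pow_add _ _ _).symm
      _ = (r * z) ^ (2 * z - 4) := by congr 1; omega
  -- the target set is contained in the union
  have hsub : {w ∈ RedFilledWalks Er Eb z S₁ S₂ |
        ∃ j : Fin (z + 1), j ≠ 0 ∧ j ≠ Fin.last z ∧ w j = S} ⊆
      ⋃ j ∈ Finset.Ico 1 z, t j := by
    rintro w ⟨hw, j0, hj0, hjl, hS⟩
    have h1 : 1 ≤ (j0 : ℕ) := by
      rcases Nat.eq_zero_or_pos (j0 : ℕ) with h | h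
      · exact absurd (Fin.ext h) hj0
      · exact h
    have h2 : (j0 : ℕ) < z := by
      rcases lt_or_eq_of_le (Nat.lt_succ_iff.mp j0.isLt) with h | h
      · exact h
      · exact absurd (Fin.ext (by simpa using h)) hjl
    refine Set.mem_biUnion (Finset.mem_Ico.mpr ⟨h1, h2⟩) ⟨hw, j0.isLt, ?_⟩
    rwa [show (⟨(j0 : ℕ), j0.isLt⟩ : Fin (z + 1)) = j0 from Fin.ext rfl]
  -- natural-number bound
  have hN : {w ∈ RedFilledWalks Er Eb z S₁ S₂ |
        ∃ j : Fin (z + 1), j ≠ 0 ∧ j ≠ Fin.last z ∧ w j = S}.ncard ≤ (r * z) ^ (2 * z - 3) :=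
    calc {w ∈ RedFilledWalks Er Eb z S₁ S₂ |
          ∃ j : Fin (z + 1), j ≠ 0 ∧ j ≠ Fin.last z ∧ w j = S}.ncard
        ≤ (⋃ j ∈ Finset.Ico 1 z, t j).ncard := Set.ncard_le_ncard hsub (Set.toFinite _)
      _ ≤ ∑ j ∈ Finset.Ico 1 z, (t j).ncard := my_biUnion _ _
      _ ≤ ∑ _j ∈ Finset.Ico 1 z, (r * z) ^ (2 * z - 4) := Finset.sum_le_sum htj
      _ = (z - 1) * (r * z) ^ (2 * z - 4) := by rw [Finset.sum_const, Nat.card_Ico, smul_eq_mul]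
      _ ≤ (r * z) * (r * z) ^ (2 * z - 4) := by
          have : z - 1 ≤ r * z := le_trans (Nat.sub_le z 1) (Nat.le_mul_of_pos_left z hr)
          exact Nat.mul_le_mul_right _ this
      _ = (r * z) ^ (2 * z - 3) := by
          rw [← pow_succ']
          congr 1; omega
  -- pass to the reals
  have hzr : (0 : ℝ) < (z : ℝ) * r := by
    have h1 : (0 : ℝ) < (z : ℝ) := by exact_mod_cast Nat.lt_of_lt_of_le (by norm_num) hz
    have h2 : (0 : ℝ) < (r : ℝ) := by exact_mod_cast hr
    exact mul_pos h1 h2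
  rw [le_div_iff₀ hzr]
  have key : {w ∈ RedFilledWalks Er Eb z S₁ S₂ |
        ∃ j : Fin (z + 1), j ≠ 0 ∧ j ≠ Fin.last z ∧ w j = S}.ncard * (z * r)
      ≤ (r * z) ^ (2 * (z - 1)) := by
    have h1 := Nat.mul_le_mul hN (le_refl (z * r))
    have e : 2 * (z - 1) = (2 * z - 3) + 1 := by
      clear_value t
      clear hsub htj hN ht t h1
      omega
    have h2 : (r * z) ^ (2 * z - 3) * (z * r) = (r * z) ^ (2 * (z - 1)) := by
      rw [e, pow_succ]
      ring
    exact h2 ▸ h1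
  calc ({w ∈ RedFilledWalks Er Eb z S₁ S₂ |
        ∃ j : Fin (z + 1), j ≠ 0 ∧ j ≠ Fin.last z ∧ w j = S}.ncard : ℝ) * ((z : ℝ) * r)
      = (({w ∈ RedFilledWalks Er Eb z S₁ S₂ |
        ∃ j : Fin (z + 1), j ≠ 0 ∧ j ≠ Fin.last z ∧ w j = S}.ncard * (z * r) : ℕ) : ℝ) := by
        push_cast; ring
    _ ≤ (((r * z) ^ (2 * (z - 1)) : ℕ) : ℝ) := Nat.cast_le.mpr key
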